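/- If A is an abelian category with enough projectives that is syzygy-finite (there exist d ≥ 1 and an object E with Ω^d(A) ⊆ add E) and A has infinite global dimension, then E is a virtually d-periodic object. -/
import Mathlib


open CategoryTheory Limits Pretriangulated

noncomputable section

namespace SingPaper

variable {A : Type*} [Category A] [Abelian A] [EnoughProjectives A]

/-- A chosen first syzygy `Ω(M)`: the kernel of the chosen epimorphism
`Projective.π M : Projective.over M ⟶ M` from a projective object. -/
def syz (M : A) : A := kernel (Projective.π M)

/-- Iterated syzygies `Ω^d(M)`. -/
def syzPow (d : ℕ) (M : A) : A := match d with
  | 0 => M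
  | n + 1 => syz (syzPow n M)

/-- `extClosure M` is the class of objects of `⟨M⟩`, the smallest full subcategory of `A`
containing `M` and all projective objects which is closed under direct summands and
extensions. -/
inductive extClosure (M : A) : A → Prop
  | self : extClosure M M
  | proj (P : A) : Projective P → extClosure M P
  | summand (X Y : A) (s : X ⟶ Y) (r : Y ⟶ X) :
      s ≫ r = 𝟙 X → extClosure M Y → extClosure M X
  | ext (X Y Z : A) (f : X ⟶ Y) (g : Y ⟶ Z) (w : f ≫ g = 0) :
      (ShortComplex.mk f g w).ShortExact →
      extClosure M X → extClosure M Z → extClosure M Y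

/-- `M` has finite projective dimension iff some iterated syzygy is projective. -/
def HasFiniteProjDim (M : A) : Prop := ∃ n : ℕ, Projective (syzPow n M)

/-- `M` is virtually `d`-periodic: it has infinite projective dimension and
`Ω^d(M)` belongs to `⟨M⟩`. -/
def VirtuallyPeriodic (d : ℕ) (M : A) : Prop :=
  ¬ HasFiniteProjDim M ∧ extClosure M (syzPow d M)

/-- The abelian category `A` has finite global dimension: there is a uniform bound `n`
such that every object has projective dimension at most `n`, i.e. `Ω^n(M)` is
projective for every `M`. -/
def HasFiniteGlobalDimension (A : Type*) [Category A] [Abelian A] [EnoughProjectives A] :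
    Prop :=
  ∃ n : ℕ, ∀ M : A, Projective (syzPow n M)

attribute [local instance] Abelian.hasFiniteBiproducts

/-- `Y` belongs to `add X`: it is a direct summand of a finite direct sum of copies
of `X`. -/
def inAdd (X Y : A) : Prop :=
  ∃ (n : ℕ) (s : Y ⟶ ⨁ (fun _ : Fin n => X)) (r : (⨁ fun _ : Fin n => X) ⟶ Y),
    s ≫ r = 𝟙 Y

/-- `X` and `Y` are isomorphic in the stable category `A` modulo projectives:
they become isomorphic after adding projective direct summands. -/
def StablyIso (X Y : A) : Prop :=
  ∃ P Q : A, Projective P ∧ Projective Q ∧ Nonempty (X ⊞ P ≅ Y ⊞ Q)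

/-- `syzSum M e = M ⊕ Ω(M) ⊕ ⋯ ⊕ Ω^e(M)`. -/
def syzSum (M : A) : ℕ → A
  | 0 => M
  | n + 1 => syzSum M n ⊞ syzPow (n + 1) M

/-- `M` is ultimately-closed: there is `d ≥ 1` such that `Ω^d(M)` is stably
isomorphic to an object of `add (M ⊕ Ω(M) ⊕ ⋯ ⊕ Ω^{d-1}(M))`. -/
def UltimatelyClosed (M : A) : Prop :=
  ∃ d : ℕ, 1 ≤ d ∧ ∃ X : A, inAdd (syzSum M (d - 1)) X ∧ StablyIso (syzPow d M) X

-- ### Auxiliary lemmas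
open ZeroObject

lemma syzPow_succ_eq (n : ℕ) (M : A) : syzPow (n + 1) M = syzPow n (syz M) := by
  induction n with
  | zero => rfl
  | succ n ih => show syz (syzPow (n + 1) M) = syz (syzPow n (syz M)); rw [ih]

lemma syzPow_add (a b : ℕ) (M : A) : syzPow (a + b) M = syzPow a (syzPow b M) := by
  induction b with
  | zero => rfl
  | succ b ih =>
      show syz (syzPow (a + b) M) = syzPow a (syz (syzPow b M))
      rw [ih]
      exact syzPow_succ_eq a (syzPow b M)

lemma projective_of_retract {X Y : A} (s : X ⟶ Y) (r : Y ⟶ X) (h : s ≫ r = 𝟙 X)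
    (_ : Projective Y) : Projective X where
  factors {E Z} f e he := by
    obtain ⟨g, hg⟩ := Projective.factors (r ≫ f) e
    exact ⟨s ≫ g, by rw [Category.assoc, hg, ← Category.assoc, h, Category.id_comp]⟩

lemma schanuel_retract {M N P Q K : A} (p : P ⟶ M) (q : Q ⟶ N) [Epi p] [Epi q]
    [Projective P] [Projective Q]
    (i : K ⟶ Q) (hiq : i ≫ q = 0) (hi : IsLimit (KernelFork.ofι i hiq))
    (s : M ⟶ N) (r : N ⟶ M) (hsr : s ≫ r = 𝟙 M) :
    ∃ (s' : kernel p ⟶ K ⊞ P) (r' : K ⊞ P ⟶ kernel p), s' ≫ r' = 𝟙 (kernel p) := by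
  obtain ⟨s₁, hs₁⟩ := Projective.factors (p ≫ s) q
  obtain ⟨r₁, hr₁⟩ := Projective.factors (q ≫ r) p
  have ht : (s₁ ≫ r₁ - 𝟙 P) ≫ p = 0 := by
    simp only [Preadditive.sub_comp, Category.assoc, hr₁, Category.id_comp]
    rw [← Category.assoc, hs₁, Category.assoc, hsr, Category.comp_id, sub_self]
  set t : P ⟶ kernel p := kernel.lift p (s₁ ≫ r₁ - 𝟙 P) ht with htdef
  have hti : t ≫ kernel.ι p = s₁ ≫ r₁ - 𝟙 P := kernel.lift_ι _ _ _
  have hσw : (kernel.ι p ≫ s₁) ≫ q = 0 := by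
    rw [Category.assoc, hs₁, ← Category.assoc, kernel.condition, zero_comp]
  obtain ⟨σ, hσ0⟩ := KernelFork.IsLimit.lift' hi (kernel.ι p ≫ s₁) hσw
  have hσ : σ ≫ i = kernel.ι p ≫ s₁ := hσ0
  have hρw : (i ≫ r₁) ≫ p = 0 := by
    rw [Category.assoc, hr₁, ← Category.assoc, hiq, zero_comp]
  set ρ : K ⟶ kernel p := kernel.lift p (i ≫ r₁) hρw with hρdef
  have hρ : ρ ≫ kernel.ι p = i ≫ r₁ := kernel.lift_ι _ _ _
  have key : σ ≫ ρ = 𝟙 (kernel p) + kernel.ι p ≫ t := by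
    rw [← cancel_mono (kernel.ι p)]
    rw [Category.assoc, hρ, ← Category.assoc, hσ]
    simp only [Preadditive.add_comp, Category.assoc, hti, Category.id_comp]
    simp [Preadditive.comp_sub]
  refine ⟨biprod.lift σ (kernel.ι p), biprod.desc ρ (-t), ?_⟩
  rw [biprod.lift_desc, key]
  simp

/-- `biprod.map (kernel.ι f) (kernel.ι g)` is a kernel of `biprod.map f g`. -/
def isLimitKernelBiprodMap {X₁ X₂ Y₁ Y₂ : A} (f : X₁ ⟶ Y₁) (g : X₂ ⟶ Y₂)
    (w : biprod.map (kernel.ι f) (kernel.ι g) ≫ biprod.map f g = 0) :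
    IsLimit (KernelFork.ofι (biprod.map (kernel.ι f) (kernel.ι g)) w) := by
  refine KernelFork.IsLimit.ofι _ _
    (fun {T} t ht => biprod.lift (kernel.lift f (t ≫ biprod.fst) ?_)
      (kernel.lift g (t ≫ biprod.snd) ?_)) ?_ ?_
  · rw [Category.assoc, ← biprod.map_fst, ← Category.assoc, ht, zero_comp]
  · rw [Category.assoc, ← biprod.map_snd, ← Category.assoc, ht, zero_comp]
  · intro T t ht
    ext <;> simp
  · intro T t ht m hm
    rw [← cancel_mono (biprod.map (kernel.ι f) (kernel.ι g)), hm]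
    ext <;> simp

/-- `kernel.ι f ≫ biprod.inl` is a kernel of `biprod.map f (𝟙 Q)`. -/
def isLimitKernelBiprodMapId {P Y Q : A} (f : P ⟶ Y)
    (w : (kernel.ι f ≫ biprod.inl) ≫ biprod.map f (𝟙 Q) = 0) :
    IsLimit (KernelFork.ofι (kernel.ι f ≫ biprod.inl) w) := by
  refine KernelFork.IsLimit.ofι _ _
    (fun {T} t ht => kernel.lift f (t ≫ biprod.fst) ?_) ?_ ?_
  · rw [Category.assoc, ← biprod.map_fst, ← Category.assoc, ht, zero_comp]
  · intro T t ht
    have h2 : t ≫ biprod.snd = 0 := by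
      have h3 := ht =≫ biprod.snd
      simpa using h3
    ext
    · simp
    · simpa using h2.symm
  · intro T t ht m hm
    rw [← cancel_mono (kernel.ι f ≫ biprod.inl), hm]
    have h2 : t ≫ biprod.snd = 0 := by
      have h3 := ht =≫ biprod.snd
      simpa using h3
    ext
    · simp
    · simp [h2]

lemma proj_syzPow_retract (n : ℕ) : ∀ {X Y Q : A}, Projective Q →
    ∀ (s : X ⟶ Y ⊞ Q) (r : Y ⊞ Q ⟶ X), s ≫ r = 𝟙 X →
    Projective (syzPow n Y) → Projective (syzPow n X) := by
  induction n with
  | zero =>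
      intro X Y Q hQ s r hsr hY
      haveI := hQ
      haveI : Projective Y := hY
      exact projective_of_retract s r hsr inferInstance
  | succ n ih =>
      intro X Y Q hQ s r hsr hY
      haveI := hQ
      have w : (kernel.ι (Projective.π Y) ≫ biprod.inl) ≫
          biprod.map (Projective.π Y) (𝟙 Q) = 0 := by
        rw [Category.assoc, biprod.inl_map, ← Category.assoc, kernel.condition, zero_comp]
      obtain ⟨s', r', hsr'⟩ := schanuel_retract (Projective.π X)
        (biprod.map (Projective.π Y) (𝟙 Q)) _ w (isLimitKernelBiprodMapId _ w) s r hsr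
      rw [syzPow_succ_eq]
      have hY' : Projective (syzPow n (syz Y)) := by rw [← syzPow_succ_eq]; exact hY
      exact ih inferInstance s' r' hsr' hY'

lemma proj_syzPow_retract' (n : ℕ) {X Y : A} (s : X ⟶ Y) (r : Y ⟶ X) (hsr : s ≫ r = 𝟙 X)
    (hY : Projective (syzPow n Y)) : Projective (syzPow n X) := by
  refine proj_syzPow_retract n (Q := (0 : A)) inferInstance
    (s ≫ biprod.inl) (biprod.fst ≫ r) ?_ hY
  rw [Category.assoc, biprod.inl_fst_assoc, hsr]

lemma proj_syzPow_of_iso (n : ℕ) {X Y : A} (e : X ≅ Y)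
    (hY : Projective (syzPow n Y)) : Projective (syzPow n X) :=
  proj_syzPow_retract' n e.hom e.inv e.hom_inv_id hY

lemma syz_projective {X : A} (hX : Projective X) : Projective (syz X) := by
  haveI := hX
  obtain ⟨σ, hσ⟩ := Projective.factors (𝟙 X) (Projective.π X)
  have hw : (𝟙 (Projective.over X) - Projective.π X ≫ σ) ≫ Projective.π X = 0 := by
    simp [Preadditive.sub_comp, Category.assoc, hσ]
  set t : Projective.over X ⟶ kernel (Projective.π X) :=
    kernel.lift (Projective.π X) (𝟙 (Projective.over X) - Projective.π X ≫ σ) hw with htdef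
  have hti : t ≫ kernel.ι (Projective.π X) = 𝟙 _ - Projective.π X ≫ σ := kernel.lift_ι _ _ _
  have hit : kernel.ι (Projective.π X) ≫ t = 𝟙 (kernel (Projective.π X)) := by
    rw [← cancel_mono (kernel.ι (Projective.π X)), Category.assoc, hti, Category.id_comp]
    simp [Preadditive.comp_sub, kernel.condition_assoc]
  exact projective_of_retract (kernel.ι (Projective.π X)) t hit inferInstance

lemma proj_syzPow_of_projective (n : ℕ) {X : A} (hX : Projective X) :
    Projective (syzPow n X) := by
  induction n with
  | zero => exact hX
  | succ n ih => exact syz_projective ih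

lemma proj_syzPow_biprod (n : ℕ) : ∀ {Y Z : A}, Projective (syzPow n Y) →
    Projective (syzPow n Z) → Projective (syzPow n (Y ⊞ Z)) := by
  induction n with
  | zero =>
      intro Y Z hY hZ
      haveI : Projective Y := hY
      haveI : Projective Z := hZ
      exact (inferInstance : Projective (Y ⊞ Z))
  | succ n ih =>
      intro Y Z hY hZ
      have w : biprod.map (kernel.ι (Projective.π Y)) (kernel.ι (Projective.π Z)) ≫
          biprod.map (Projective.π Y) (Projective.π Z) = 0 := by
        ext <;> simp
      obtain ⟨s', r', hsr'⟩ := schanuel_retract (Projective.π (Y ⊞ Z))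
        (biprod.map (Projective.π Y) (Projective.π Z)) _ w
        (isLimitKernelBiprodMap _ _ w) (𝟙 (Y ⊞ Z)) (𝟙 (Y ⊞ Z)) (Category.id_comp _)
      rw [syzPow_succ_eq]
      have hYZ : Projective (syzPow n (syz Y ⊞ syz Z)) := by
        apply ih
        · rw [← syzPow_succ_eq]; exact hY
        · rw [← syzPow_succ_eq]; exact hZ
      exact proj_syzPow_retract n inferInstance s' r' hsr' hYZ

lemma isZero_biproduct_empty (f : Fin 0 → A) : IsZero (⨁ f) := by
  rw [IsZero.iff_id_eq_zero]
  exact biproduct.hom_ext' _ _ (fun j => j.elim0)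

/-- The biproduct over `Fin (k+1)` splits off its first factor. -/
def biproductFinSuccIso {k : ℕ} (f : Fin (k + 1) → A) :
    (⨁ f) ≅ f 0 ⊞ ⨁ (fun j : Fin k => f j.succ) where
  hom := biprod.lift (biproduct.π f 0) (biproduct.lift fun j => biproduct.π f j.succ)
  inv := biprod.desc (biproduct.ι f 0) (biproduct.desc fun j => biproduct.ι f j.succ)
  hom_inv_id := by
    rw [biprod.lift_desc, biproduct.lift_desc, ← biproduct.total, Fin.sum_univ_succ]
  inv_hom_id := by
    ext <;> simp [biproduct.ι_π, Fin.succ_ne_zero] <;>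
      (intro h; exact absurd h.symm (Fin.succ_ne_zero _))

lemma proj_syzPow_biproduct : ∀ (k : ℕ) (f : Fin k → A) (n : ℕ),
    (∀ j, Projective (syzPow n (f j))) → Projective (syzPow n (⨁ f)) := by
  intro k
  induction k with
  | zero =>
      intro f n _
      exact proj_syzPow_of_projective n
        (Projective.of_iso (isZero_biproduct_empty f).isoZero.symm inferInstance)
  | succ k ih =>
      intro f n h
      exact proj_syzPow_of_iso n (biproductFinSuccIso f)
        (proj_syzPow_biprod n (h 0) (ih _ n fun j => h j.succ))

lemma extClosure_of_iso {M X Y : A} (e : X ≅ Y) (h : extClosure M Y) : extClosure M X :=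
  .summand X Y e.hom e.inv e.hom_inv_id h

lemma extClosure_biprod {M X Z : A} (hX : extClosure M X) (hZ : extClosure M Z) :
    extClosure M (X ⊞ Z) :=
  .ext X (X ⊞ Z) Z biprod.inl biprod.snd (by simp)
    (ShortComplex.Splitting.shortExact (ShortComplex.Splitting.ofHasBinaryBiproduct X Z)) hX hZ

lemma extClosure_biproduct {M : A} : ∀ (k : ℕ) (f : Fin k → A),
    (∀ j, extClosure M (f j)) → extClosure M (⨁ f) := by
  intro k
  induction k with
  | zero =>
      intro f _
      exact .proj _ (Projective.of_iso (isZero_biproduct_empty f).isoZero.symm inferInstance)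
  | succ k ih =>
      intro f h
      exact extClosure_of_iso (biproductFinSuccIso f)
        (extClosure_biprod (h 0) (ih _ fun j => h j.succ))

lemma stablyIso_refl (X : A) : StablyIso X X :=
  ⟨0, 0, inferInstance, inferInstance, ⟨Iso.refl _⟩⟩

/-- If `A` is syzygy-finite, witnessed by `d ≥ 1` and an object `E` with
`Ω^d(A) ⊆ add E`, and `A` has infinite global dimension, then `E` is virtually
`d`-periodic. -/
theorem virtuallyPeriodic_of_syzygyFinite (d : ℕ) (hd : 1 ≤ d) (E : A)
    (hE : ∀ N M : A, StablyIso N (syzPow d M) → inAdd E N)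
    (h : ¬ HasFiniteGlobalDimension A) :
    VirtuallyPeriodic d E := by
  constructor
  · rintro ⟨n, hn⟩
    apply h
    refine ⟨n + d, fun M => ?_⟩
    rw [syzPow_add]
    obtain ⟨k, s, r, hsr⟩ := hE (syzPow d M) M (stablyIso_refl _)
    exact proj_syzPow_retract' n s r hsr
      (proj_syzPow_biproduct k _ n (fun _ => hn))
  · obtain ⟨k, s, r, hsr⟩ := hE (syzPow d E) E (stablyIso_refl _)
    exact .summand _ _ s r hsr (extClosure_biproduct k _ fun _ => .self)


end SingPaper
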